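/- The two-dimensional Romik map 𝓡 on [0,1]×[0,1], defined by 𝓡(x,y) = (x/(1-2x), y/(1+2y)) for x ∈ [0,1/3), 𝓡(x,y) = (1/x - 2, 1/(y+2)) for x ∈ [1/3,1/2), and 𝓡(x,y) = (2 - 1/x, 1/(2-y)) for x ∈ [1/2,1], preserves the measure with density 1/(x+y-2xy)² with respect to two-dimensional Lebesgue measure: for every Borel set D ⊆ [0,1]², the integral of 1/(x+y-2xy)² over D equals the integral over 𝓡(D). -/

import Mathlib

open MeasureTheory

lemma det_aux (a b : ℝ) :
    (((ContinuousLinearMap.smulRight (1 : ℝ →L[ℝ] ℝ) a).comp (ContinuousLinearMap.fst ℝ ℝ ℝ)).prod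
     ((ContinuousLinearMap.smulRight (1 : ℝ →L[ℝ] ℝ) b).comp (ContinuousLinearMap.snd ℝ ℝ ℝ))).det = a * b := by
  have : (((ContinuousLinearMap.smulRight (1 : ℝ →L[ℝ] ℝ) a).comp (ContinuousLinearMap.fst ℝ ℝ ℝ)).prod
     ((ContinuousLinearMap.smulRight (1 : ℝ →L[ℝ] ℝ) b).comp (ContinuousLinearMap.snd ℝ ℝ ℝ)) : ℝ×ℝ →ₗ[ℝ] ℝ×ℝ).det = a*b := by
    rw [← LinearMap.det_toMatrix (Module.Basis.finTwoProd ℝ), Matrix.det_fin_two]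
    simp [LinearMap.toMatrix_apply, Module.Basis.finTwoProd]
  exact this

lemma branch_lemma (f g f' g' : ℝ → ℝ) (s : Set (ℝ × ℝ)) (hs : MeasurableSet s)
    (hf : ∀ p : ℝ × ℝ, p ∈ s → HasDerivAt f (f' p.1) p.1)
    (hg : ∀ p : ℝ × ℝ, p ∈ s → HasDerivAt g (g' p.2) p.2)
    (hinj : Set.InjOn (fun p : ℝ × ℝ => (f p.1, g p.2)) s)
    (hdens : ∀ p ∈ s, |f' p.1 * g' p.2| * (1 / (f p.1 + g p.2 - 2 * f p.1 * g p.2)^2)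
      = 1 / (p.1 + p.2 - 2*p.1*p.2)^2) :
    MeasurableSet ((fun p : ℝ × ℝ => (f p.1, g p.2)) '' s) ∧
    (∫⁻ p in (fun p : ℝ × ℝ => (f p.1, g p.2)) '' s, ENNReal.ofReal (1 / (p.1 + p.2 - 2*p.1*p.2)^2) ∂volume
      = ∫⁻ p in s, ENNReal.ofReal (1 / (p.1 + p.2 - 2*p.1*p.2)^2) ∂volume) := by
  have hder : ∀ p ∈ s, HasFDerivWithinAt (fun p : ℝ × ℝ => (f p.1, g p.2))
      ((((ContinuousLinearMap.smulRight (1 : ℝ →L[ℝ] ℝ) (f' p.1)).comp (ContinuousLinearMap.fst ℝ ℝ ℝ)).prod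
       ((ContinuousLinearMap.smulRight (1 : ℝ →L[ℝ] ℝ) (g' p.2)).comp (ContinuousLinearMap.snd ℝ ℝ ℝ)))) s p := by
    intro p hp
    have h1 : HasFDerivAt (fun q : ℝ × ℝ => f q.1)
        ((ContinuousLinearMap.smulRight (1 : ℝ →L[ℝ] ℝ) (f' p.1)).comp (ContinuousLinearMap.fst ℝ ℝ ℝ)) p :=
      ((hf p hp).hasFDerivAt).comp p (hasFDerivAt_fst)
    have h2 : HasFDerivAt (fun q : ℝ × ℝ => g q.2)
        ((ContinuousLinearMap.smulRight (1 : ℝ →L[ℝ] ℝ) (g' p.2)).comp (ContinuousLinearMap.snd ℝ ℝ ℝ)) p :=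
      ((hg p hp).hasFDerivAt).comp p (hasFDerivAt_snd)
    exact (h1.prodMk h2).hasFDerivWithinAt
  constructor
  · exact measurable_image_of_fderivWithin hs hder hinj
  rw [lintegral_image_eq_lintegral_abs_det_fderiv_mul volume hs hder hinj]
  apply setLIntegral_congr_fun hs
  intro p hp
  dsimp only
  rw [det_aux, ← ENNReal.ofReal_mul (abs_nonneg _), hdens p hp]

lemma density_transfer (x y c : ℝ) (hc : c ≠ 0) (X Y : ℝ) (j : ℝ)
    (hXY : X + Y - 2*X*Y = (x + y - 2*x*y)/c) (hj : |j| = 1/c^2) :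
    |j| * (1 / (X + Y - 2*X*Y)^2) = 1 / (x + y - 2*x*y)^2 := by
  rw [hj, hXY]
  rcases eq_or_ne (x + y - 2*x*y) 0 with h | h
  · simp [h]
  · field_simp

lemma deriv0f {x : ℝ} (hx : x < 1/3) : HasDerivAt (fun x : ℝ => x / (1 - 2*x)) (1/(1-2*x)^2) x := by
  have hne : (1 : ℝ) - 2*x ≠ 0 := by intro h; nlinarith
  have hd : HasDerivAt (fun x : ℝ => 1 - 2*x) (-2) x := by
    simpa using ((hasDerivAt_id x).const_mul (2:ℝ)).const_sub 1
  refine ((hasDerivAt_id x).div hd hne).congr_deriv ?_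
  simp only [id]; field_simp; ring

lemma deriv0g {y : ℝ} (hy : 0 ≤ y) : HasDerivAt (fun y : ℝ => y / (1 + 2*y)) (1/(1+2*y)^2) y := by
  have hne : (1 : ℝ) + 2*y ≠ 0 := by positivity
  have hd : HasDerivAt (fun y : ℝ => 1 + 2*y) (2) y := by
    simpa using ((hasDerivAt_id y).const_mul (2:ℝ)).const_add 1
  refine ((hasDerivAt_id y).div hd hne).congr_deriv ?_
  simp only [id]; field_simp; ring

lemma branch0 (s : Set (ℝ × ℝ)) (hs : MeasurableSet s)
    (hb : ∀ p ∈ s, 0 ≤ p.1 ∧ p.1 < 1/3 ∧ 0 ≤ p.2 ∧ p.2 ≤ 1) :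
    MeasurableSet ((fun p : ℝ × ℝ => (p.1 / (1 - 2*p.1), p.2 / (1 + 2*p.2))) '' s) ∧
    (∫⁻ p in (fun p : ℝ × ℝ => (p.1 / (1 - 2*p.1), p.2 / (1 + 2*p.2))) '' s,
        ENNReal.ofReal (1 / (p.1 + p.2 - 2*p.1*p.2)^2) ∂volume
      = ∫⁻ p in s, ENNReal.ofReal (1 / (p.1 + p.2 - 2*p.1*p.2)^2) ∂volume) ∧
    (∀ q ∈ (fun p : ℝ × ℝ => (p.1 / (1 - 2*p.1), p.2 / (1 + 2*p.2))) '' s, q.2 ≤ 1/3) := by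
  have himg : ∀ q ∈ (fun p : ℝ × ℝ => (p.1 / (1 - 2*p.1), p.2 / (1 + 2*p.2))) '' s, q.2 ≤ 1/3 := by
    rintro q ⟨p, hp, rfl⟩
    obtain ⟨h1, h2, h3, h4⟩ := hb p hp
    show p.2 / (1 + 2*p.2) ≤ 1/3
    rw [div_le_div_iff₀ (by linarith) (by norm_num)]
    linarith
  have key := branch_lemma (fun x => x / (1 - 2*x)) (fun y => y / (1 + 2*y))
      (fun x => 1/(1-2*x)^2) (fun y => 1/(1+2*y)^2) s hs
      (fun p hp => deriv0f (hb p hp).2.1)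
      (fun p hp => deriv0g (hb p hp).2.2.1)
      ?_ ?_
  · exact ⟨key.1, key.2, himg⟩
  · intro p hp q hq h
    obtain ⟨hp1, hp2, hp3, hp4⟩ := hb p hp
    obtain ⟨hq1, hq2, hq3, hq4⟩ := hb q hq
    simp only [Prod.mk.injEq] at h
    obtain ⟨h1, h2⟩ := h
    rw [div_eq_div_iff (by linarith) (by linarith)] at h1
    rw [div_eq_div_iff (by linarith) (by linarith)] at h2
    have e1 : p.1 = q.1 := by nlinarith
    have e2 : p.2 = q.2 := by nlinarith
    exact Prod.ext e1 e2
  · intro p hp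
    obtain ⟨hp1, hp2, hp3, hp4⟩ := hb p hp
    have hcx : (1:ℝ) - 2*p.1 > 0 := by linarith
    have hcy : (1:ℝ) + 2*p.2 > 0 := by linarith
    apply density_transfer p.1 p.2 ((1 - 2*p.1) * (1 + 2*p.2)) (by positivity)
    · have : (1:ℝ) - p.1 * 2 ≠ 0 := by intro h; linarith
      field_simp
      ring
    · rw [abs_of_nonneg (by positivity)]
      rw [div_mul_div_comm, one_mul, mul_pow]

lemma deriv1f {x : ℝ} (hx : x ≠ 0) : HasDerivAt (fun x : ℝ => 1/x - 2) (-(1/x^2)) x := by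
  refine (((hasDerivAt_const x (1:ℝ)).div (hasDerivAt_id x) hx).sub_const 2).congr_deriv ?_
  simp only [id]; field_simp; ring

lemma deriv1g {y : ℝ} (hy : 0 ≤ y) : HasDerivAt (fun y : ℝ => 1/(y+2)) (-(1/(y+2)^2)) y := by
  have hne : y + 2 ≠ 0 := by positivity
  refine ((hasDerivAt_const y (1:ℝ)).div ((hasDerivAt_id y).add_const 2) hne).congr_deriv ?_
  simp only [id]; field_simp; ring

lemma deriv2f {x : ℝ} (hx : x ≠ 0) : HasDerivAt (fun x : ℝ => 2 - 1/x) (1/x^2) x := by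
  refine (((hasDerivAt_const x (1:ℝ)).div (hasDerivAt_id x) hx).const_sub 2).congr_deriv ?_
  simp only [id]; field_simp; ring

lemma deriv2g {y : ℝ} (hy : y ≤ 1) : HasDerivAt (fun y : ℝ => 1/(2-y)) (1/(2-y)^2) y := by
  have hne : (2:ℝ) - y ≠ 0 := by intro h; linarith
  refine ((hasDerivAt_const y (1:ℝ)).div ((hasDerivAt_id y).const_sub 2) hne).congr_deriv ?_
  simp only [id]; field_simp; ring

lemma branch1 (s : Set (ℝ × ℝ)) (hs : MeasurableSet s)
    (hb : ∀ p ∈ s, 1/3 ≤ p.1 ∧ p.1 < 1/2 ∧ 0 ≤ p.2 ∧ p.2 ≤ 1) :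
    MeasurableSet ((fun p : ℝ × ℝ => (1/p.1 - 2, 1/(p.2 + 2))) '' s) ∧
    (∫⁻ p in (fun p : ℝ × ℝ => (1/p.1 - 2, 1/(p.2 + 2))) '' s,
        ENNReal.ofReal (1 / (p.1 + p.2 - 2*p.1*p.2)^2) ∂volume
      = ∫⁻ p in s, ENNReal.ofReal (1 / (p.1 + p.2 - 2*p.1*p.2)^2) ∂volume) ∧
    (∀ q ∈ (fun p : ℝ × ℝ => (1/p.1 - 2, 1/(p.2 + 2))) '' s, 1/3 ≤ q.2 ∧ q.2 ≤ 1/2) := by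
  have himg : ∀ q ∈ (fun p : ℝ × ℝ => (1/p.1 - 2, 1/(p.2 + 2))) '' s, 1/3 ≤ q.2 ∧ q.2 ≤ 1/2 := by
    rintro q ⟨p, hp, rfl⟩
    obtain ⟨h1, h2, h3, h4⟩ := hb p hp
    constructor
    · show (1:ℝ)/3 ≤ 1/(p.2 + 2)
      rw [div_le_div_iff₀ (by norm_num) (by linarith)]; linarith
    · show (1:ℝ)/(p.2 + 2) ≤ 1/2
      rw [div_le_div_iff₀ (by linarith) (by norm_num)]; linarith
  have key := branch_lemma (fun x => 1/x - 2) (fun y => 1/(y+2))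
      (fun x => -(1/x^2)) (fun y => -(1/(y+2)^2)) s hs
      (fun p hp => deriv1f (by have := hb p hp; intro h; rw [h] at this; linarith [this.1]))
      (fun p hp => deriv1g (hb p hp).2.2.1)
      ?_ ?_
  · exact ⟨key.1, key.2, himg⟩
  · intro p hp q hq h
    obtain ⟨hp1, hp2, hp3, hp4⟩ := hb p hp
    obtain ⟨hq1, hq2, hq3, hq4⟩ := hb q hq
    simp only [Prod.mk.injEq] at h
    obtain ⟨h1, h2⟩ := h
    have h1' : 1/p.1 = 1/q.1 := by linarith
    rw [div_eq_div_iff (by linarith) (by linarith)] at h1'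
    rw [div_eq_div_iff (by linarith) (by linarith)] at h2
    exact Prod.ext (by linarith) (by linarith)
  · intro p hp
    obtain ⟨hp1, hp2, hp3, hp4⟩ := hb p hp
    have hcx : p.1 > 0 := by linarith
    have hcy : p.2 + 2 > 0 := by linarith
    apply density_transfer p.1 p.2 (p.1 * (p.2 + 2)) (by positivity)
    · field_simp
      ring
    · rw [neg_mul_neg, abs_of_nonneg (by positivity)]
      rw [div_mul_div_comm, one_mul, mul_pow]

lemma branch2 (s : Set (ℝ × ℝ)) (hs : MeasurableSet s)
    (hb : ∀ p ∈ s, 1/2 ≤ p.1 ∧ p.1 ≤ 1 ∧ 0 ≤ p.2 ∧ p.2 ≤ 1) :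
    MeasurableSet ((fun p : ℝ × ℝ => (2 - 1/p.1, 1/(2 - p.2))) '' s) ∧
    (∫⁻ p in (fun p : ℝ × ℝ => (2 - 1/p.1, 1/(2 - p.2))) '' s,
        ENNReal.ofReal (1 / (p.1 + p.2 - 2*p.1*p.2)^2) ∂volume
      = ∫⁻ p in s, ENNReal.ofReal (1 / (p.1 + p.2 - 2*p.1*p.2)^2) ∂volume) ∧
    (∀ q ∈ (fun p : ℝ × ℝ => (2 - 1/p.1, 1/(2 - p.2))) '' s, 1/2 ≤ q.2) := by
  have himg : ∀ q ∈ (fun p : ℝ × ℝ => (2 - 1/p.1, 1/(2 - p.2))) '' s, 1/2 ≤ q.2 := by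
    rintro q ⟨p, hp, rfl⟩
    obtain ⟨h1, h2, h3, h4⟩ := hb p hp
    show (1:ℝ)/2 ≤ 1/(2 - p.2)
    rw [div_le_div_iff₀ (by norm_num) (by linarith)]; linarith
  have key := branch_lemma (fun x => 2 - 1/x) (fun y => 1/(2-y))
      (fun x => 1/x^2) (fun y => 1/(2-y)^2) s hs
      (fun p hp => deriv2f (by have := hb p hp; intro h; rw [h] at this; linarith [this.1]))
      (fun p hp => deriv2g (hb p hp).2.2.2)
      ?_ ?_
  · exact ⟨key.1, key.2, himg⟩
  · intro p hp q hq h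
    obtain ⟨hp1, hp2, hp3, hp4⟩ := hb p hp
    obtain ⟨hq1, hq2, hq3, hq4⟩ := hb q hq
    simp only [Prod.mk.injEq] at h
    obtain ⟨h1, h2⟩ := h
    have h1' : 1/p.1 = 1/q.1 := by linarith
    rw [div_eq_div_iff (by linarith) (by linarith)] at h1'
    rw [div_eq_div_iff (by linarith) (by linarith)] at h2
    exact Prod.ext (by linarith) (by linarith)
  · intro p hp
    obtain ⟨hp1, hp2, hp3, hp4⟩ := hb p hp
    have hcx : p.1 > 0 := by linarith
    have hcy : (2:ℝ) - p.2 > 0 := by linarith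
    apply density_transfer p.1 p.2 (p.1 * (2 - p.2)) (by positivity)
    · field_simp
      ring
    · rw [abs_of_nonneg (by positivity)]
      rw [div_mul_div_comm, one_mul, mul_pow]

lemma line_null (c : ℝ) : volume {p : ℝ × ℝ | p.2 = c} = 0 := by
  have h : {p : ℝ × ℝ | p.2 = c} = (Set.univ : Set ℝ) ×ˢ ({c} : Set ℝ) := by
    ext ⟨a, b⟩; simp [Set.mem_prod, eq_comm]
  rw [h, Measure.volume_eq_prod, Measure.prod_prod]
  simp

noncomputable def romikExt (p : ℝ × ℝ) : ℝ × ℝ :=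
  if p.1 < 1/3 then (p.1 / (1 - 2*p.1), p.2 / (1 + 2*p.2))
  else if p.1 < 1/2 then (1/p.1 - 2, 1/(p.2 + 2))
  else (2 - 1/p.1, 1/(2 - p.2))

theorem romikExt_preserves_density (D : Set (ℝ × ℝ)) (hD : MeasurableSet D)
    (hsub : D ⊆ Set.Icc (0 : ℝ) 1 ×ˢ Set.Icc (0 : ℝ) 1) :
    ∫⁻ p in D, ENNReal.ofReal (1 / (p.1 + p.2 - 2*p.1*p.2)^2) ∂volume =
    ∫⁻ p in romikExt '' D, ENNReal.ofReal (1 / (p.1 + p.2 - 2*p.1*p.2)^2) ∂volume := by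
  set ρ : ℝ × ℝ → ENNReal := fun p => ENNReal.ofReal (1 / (p.1 + p.2 - 2*p.1*p.2)^2) with hρ
  -- the three pieces of D
  set D0 : Set (ℝ × ℝ) := D ∩ {p | p.1 < 1/3} with hD0def
  set D1 : Set (ℝ × ℝ) := D ∩ {p | 1/3 ≤ p.1 ∧ p.1 < 1/2} with hD1def
  set D2 : Set (ℝ × ℝ) := D ∩ {p | 1/2 ≤ p.1} with hD2def
  have hD0 : MeasurableSet D0 := hD.inter (measurableSet_lt measurable_fst measurable_const)
  have hD1 : MeasurableSet D1 := hD.inter ((measurableSet_le measurable_const measurable_fst).inter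
      (measurableSet_lt measurable_fst measurable_const))
  have hD2 : MeasurableSet D2 := hD.inter (measurableSet_le measurable_const measurable_fst)
  have hbounds : ∀ p ∈ D, 0 ≤ p.1 ∧ p.1 ≤ 1 ∧ 0 ≤ p.2 ∧ p.2 ≤ 1 := by
    intro p hp
    have := hsub hp
    rw [Set.mem_prod, Set.mem_Icc, Set.mem_Icc] at this
    exact ⟨this.1.1, this.1.2, this.2.1, this.2.2⟩
  have hb0 : ∀ p ∈ D0, 0 ≤ p.1 ∧ p.1 < 1/3 ∧ 0 ≤ p.2 ∧ p.2 ≤ 1 := by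
    intro p hp
    obtain ⟨h1, h2, h3, h4⟩ := hbounds p hp.1
    exact ⟨h1, hp.2, h3, h4⟩
  have hb1 : ∀ p ∈ D1, 1/3 ≤ p.1 ∧ p.1 < 1/2 ∧ 0 ≤ p.2 ∧ p.2 ≤ 1 := by
    intro p hp
    obtain ⟨h1, h2, h3, h4⟩ := hbounds p hp.1
    exact ⟨hp.2.1, hp.2.2, h3, h4⟩
  have hb2 : ∀ p ∈ D2, 1/2 ≤ p.1 ∧ p.1 ≤ 1 ∧ 0 ≤ p.2 ∧ p.2 ≤ 1 := by
    intro p hp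
    obtain ⟨h1, h2, h3, h4⟩ := hbounds p hp.1
    exact ⟨hp.2, h2, h3, h4⟩
  obtain ⟨hE0m, hE0i, hE0b⟩ := branch0 D0 hD0 hb0
  obtain ⟨hE1m, hE1i, hE1b⟩ := branch1 D1 hD1 hb1
  obtain ⟨hE2m, hE2i, hE2b⟩ := branch2 D2 hD2 hb2
  set E0 := (fun p : ℝ × ℝ => (p.1 / (1 - 2*p.1), p.2 / (1 + 2*p.2))) '' D0 with hE0def
  set E1 := (fun p : ℝ × ℝ => (1/p.1 - 2, 1/(p.2 + 2))) '' D1 with hE1def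
  set E2 := (fun p : ℝ × ℝ => (2 - 1/p.1, 1/(2 - p.2))) '' D2 with hE2def
  -- decomposition of D
  have hDsplit : D = D0 ∪ D1 ∪ D2 := by
    ext p
    simp only [hD0def, hD1def, hD2def, Set.mem_union, Set.mem_inter_iff, Set.mem_setOf_eq]
    constructor
    · intro h
      rcases lt_or_ge p.1 (1/3) with h1 | h1
      · exact Or.inl (Or.inl ⟨h, h1⟩)
      · rcases lt_or_ge p.1 (1/2) with h2 | h2
        · exact Or.inl (Or.inr ⟨h, h1, h2⟩)
        · exact Or.inr ⟨h, h2⟩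
    · rintro ((⟨h, _⟩ | ⟨h, _⟩) | ⟨h, _⟩) <;> exact h
  -- image of D
  have himg : romikExt '' D = E0 ∪ E1 ∪ E2 := by
    rw [hDsplit, Set.image_union, Set.image_union]
    congr 1; congr 1
    · apply Set.image_congr
      intro p hp
      have h : p.1 < 1/3 := hp.2
      simp only [romikExt]
      rw [if_pos h]
    · apply Set.image_congr
      intro p hp
      have h1 : ¬ p.1 < 1/3 := not_lt.2 hp.2.1
      have h2 : p.1 < 1/2 := hp.2.2
      simp only [romikExt]
      rw [if_neg h1, if_pos h2]
    · apply Set.image_congr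
      intro p hp
      have h : (1:ℝ)/2 ≤ p.1 := hp.2
      simp only [romikExt]
      rw [if_neg (not_lt.2 (le_trans (by norm_num) h)), if_neg (not_lt.2 h)]
  -- split LHS
  have hd01 : Disjoint D0 D1 := by
    rw [Set.disjoint_left]
    rintro p ⟨_, h1⟩ ⟨_, h2, _⟩
    have h1' : p.1 < 1/3 := h1
    linarith
  have hd012 : Disjoint (D0 ∪ D1) D2 := by
    rw [Set.disjoint_left]
    rintro p (⟨_, h1⟩ | ⟨_, _, h1⟩) ⟨_, h2⟩ <;>
      [(have h1' : p.1 < 1/3 := h1); (have h1' : p.1 < 1/2 := h1)] <;>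
      have h2' : (1:ℝ)/2 ≤ p.1 := h2 <;> linarith
  have hLHS : ∫⁻ p in D, ρ p ∂volume =
      (∫⁻ p in D0, ρ p ∂volume) + (∫⁻ p in D1, ρ p ∂volume) + (∫⁻ p in D2, ρ p ∂volume) := by
    rw [hDsplit, lintegral_union hD2 hd012, lintegral_union hD1 hd01]
  -- null set of boundary lines
  set N : Set (ℝ × ℝ) := {p | p.2 = 1/3} ∪ {p | p.2 = 1/2} with hNdef
  have hNnull : volume N = 0 := measure_union_null (line_null (1/3)) (line_null (1/2))
  have hNm : MeasurableSet N :=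
    ((measurableSet_singleton ((1:ℝ)/3)).preimage measurable_snd).union
      ((measurableSet_singleton ((1:ℝ)/2)).preimage measurable_snd)
  -- disjointness of trimmed images
  have hsub0 : E0 \ N ⊆ {p : ℝ × ℝ | p.2 < 1/3} := by
    rintro q ⟨hq, hqN⟩
    have h1 := hE0b q hq
    have h2 : q.2 ≠ 1/3 := fun h => hqN (Or.inl h)
    exact lt_of_le_of_ne h1 h2
  have hsub1 : E1 \ N ⊆ {p : ℝ × ℝ | 1/3 < p.2 ∧ p.2 < 1/2} := by
    rintro q ⟨hq, hqN⟩
    obtain ⟨h1, h2⟩ := hE1b q hq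
    exact ⟨lt_of_le_of_ne h1 (fun h => hqN (Or.inl h.symm)),
      lt_of_le_of_ne h2 (fun h => hqN (Or.inr h))⟩
  have hsub2 : E2 \ N ⊆ {p : ℝ × ℝ | 1/2 < p.2} := by
    rintro q ⟨hq, hqN⟩
    exact lt_of_le_of_ne (hE2b q hq) (fun h => hqN (Or.inr h.symm))
  have he01 : Disjoint (E0 \ N) (E1 \ N) := by
    rw [Set.disjoint_left]
    intro q hq0 hq1
    have := hsub0 hq0
    have := hsub1 hq1
    simp only [Set.mem_setOf_eq] at *
    linarith [this.1]
  have he012 : Disjoint ((E0 \ N) ∪ (E1 \ N)) (E2 \ N) := by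
    rw [Set.disjoint_left]
    intro q hq hq2
    have h2 := hsub2 hq2
    simp only [Set.mem_setOf_eq] at h2
    rcases hq with hq0 | hq1
    · have := hsub0 hq0; simp only [Set.mem_setOf_eq] at this; linarith
    · have := hsub1 hq1; simp only [Set.mem_setOf_eq] at this; linarith [this.2]
  -- split RHS
  have hRHS : ∫⁻ p in E0 ∪ E1 ∪ E2, ρ p ∂volume =
      (∫⁻ p in E0, ρ p ∂volume) + (∫⁻ p in E1, ρ p ∂volume) + (∫⁻ p in E2, ρ p ∂volume) := by
    have h1 : ∫⁻ p in E0 ∪ E1 ∪ E2, ρ p ∂volume = ∫⁻ p in (E0 ∪ E1 ∪ E2) \ N, ρ p ∂volume :=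
      setLIntegral_congr (diff_null_ae_eq_self hNnull).symm
    have h2 : (E0 ∪ E1 ∪ E2) \ N = (E0 \ N) ∪ (E1 \ N) ∪ (E2 \ N) := by
      rw [Set.union_diff_distrib, Set.union_diff_distrib]
    rw [h1, h2, lintegral_union (hE2m.diff hNm) he012, lintegral_union (hE1m.diff hNm) he01,
      setLIntegral_congr (diff_null_ae_eq_self hNnull : E0 \ N =ᵐ[volume] E0),
      setLIntegral_congr (diff_null_ae_eq_self hNnull : E1 \ N =ᵐ[volume] E1),
      setLIntegral_congr (diff_null_ae_eq_self hNnull : E2 \ N =ᵐ[volume] E2)]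
  rw [himg, hLHS, hRHS, hE0i, hE1i, hE2i]
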